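/- Let X be an arc-connected metrizable topological space, and let K_Y, K_Z ⊂ X be two disjoint, closed, connected separators with sides (Y, Yᶜ) and (Z, Zᶜ) respectively. Then at least one of the four sets Y ∩ Z, Y ∩ Zᶜ, Yᶜ ∩ Z, Yᶜ ∩ Zᶜ is empty. -/

import Mathlib

/-- A preconnected set meeting both sides of a separator meets the separator. -/
lemma cross_sep {X : Type*} [TopologicalSpace X] {K U V : Set X}
    (hU : IsOpen U) (hV : IsOpen V) (hd : Disjoint U V) (hu : U ∪ V = Kᶜ)
    {s : Set X} (hs : IsPreconnected s)
    (h1 : (s ∩ U).Nonempty) (h2 : (s ∩ V).Nonempty) : (s ∩ K).Nonempty := by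
  by_contra h
  have hsub : s ⊆ U ∪ V := by
    rw [hu]
    intro x hx hxK
    exact h ⟨x, hx, hxK⟩
  obtain ⟨x, hxs, hxU, hxV⟩ := hs U V hU hV hsub h1 h2
  exact hd.ne_of_mem hxU hxV rfl

/-- Key lemma: if `KY ⊆ Z` and `KZ ⊆ Y` then `Y' ∩ Z' = ∅`. -/
lemma key_lemma {X : Type*} [TopologicalSpace X] [PathConnectedSpace X]
    {KY KZ Y Y' Z Z' : Set X}
    (hKYcl : IsClosed KY) (hKdisj : Disjoint KY KZ) (hKZne : KZ.Nonempty)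
    (hYo : IsOpen Y) (hY'o : IsOpen Y')
    (hYd : Disjoint Y Y') (hYu : Y ∪ Y' = KYᶜ)
    (hZo : IsOpen Z) (hZ'o : IsOpen Z')
    (hZd : Disjoint Z Z') (hZu : Z ∪ Z' = KZᶜ)
    (hA : KY ⊆ Z) (hB : KZ ⊆ Y) : Y' ∩ Z' = ∅ := by
  by_contra h
  obtain ⟨x, hxY', hxZ'⟩ := Set.nonempty_iff_ne_empty.2 h
  obtain ⟨k, hk⟩ := hKZne
  obtain ⟨p⟩ := PathConnectedSpace.joined x k
  set f : ℝ → X := ⇑p.extend with hf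
  have hfc : Continuous f := p.continuous_extend
  have hf0 : f 0 = x := p.extend_zero
  have hf1 : f 1 = k := p.extend_one
  -- the whole path image meets KY
  set T : Set ℝ := Set.Icc 0 1 ∩ f ⁻¹' KY with hT
  have hTne : T.Nonempty := by
    have himg : IsPreconnected (f '' Set.Icc 0 1) :=
      isPreconnected_Icc.image f hfc.continuousOn
    have h1 : ((f '' Set.Icc 0 1) ∩ Y).Nonempty :=
      ⟨k, ⟨1, by norm_num, hf1⟩, hB hk⟩
    have h2 : ((f '' Set.Icc 0 1) ∩ Y').Nonempty :=
      ⟨x, ⟨0, by norm_num, hf0⟩, hxY'⟩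
    obtain ⟨y, ⟨t, ht, rfl⟩, hyK⟩ := cross_sep hYo hY'o hYd hYu himg h1 h2
    exact ⟨t, ht, hyK⟩
  have hTcl : IsClosed T := (isClosed_Icc).inter (hKYcl.preimage hfc)
  have hTbdd : BddBelow T := ⟨0, fun t ht => ht.1.1⟩
  set t₀ : ℝ := sInf T with ht₀
  have ht₀T : t₀ ∈ T := hTcl.csInf_mem hTne hTbdd
  have ht₀0 : 0 ≤ t₀ := ht₀T.1.1
  have ht₀1 : t₀ ≤ 1 := ht₀T.1.2
  -- the piece of the path up to t₀ goes from Z' to Z, hence meets KZ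
  have hS : IsPreconnected (f '' Set.Icc 0 t₀) :=
    isPreconnected_Icc.image f hfc.continuousOn
  have h1 : ((f '' Set.Icc 0 t₀) ∩ Z).Nonempty :=
    ⟨f t₀, ⟨t₀, ⟨ht₀0, le_refl _⟩, rfl⟩, hA ht₀T.2⟩
  have h2 : ((f '' Set.Icc 0 t₀) ∩ Z').Nonempty :=
    ⟨x, ⟨0, ⟨le_refl _, ht₀0⟩, hf0⟩, hxZ'⟩
  obtain ⟨w, ⟨s, hs, rfl⟩, hwK⟩ := cross_sep hZo hZ'o hZd hZu hS h1 h2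
  -- f s ∈ KZ ⊆ Y; also s < t₀ and the path is in Y' before t₀
  have hsne : s ≠ t₀ := by
    intro hst
    exact hKdisj.ne_of_mem ht₀T.2 hwK (by rw [hst])
  have hslt : s < t₀ := lt_of_le_of_ne hs.2 hsne
  have hS' : IsPreconnected (f '' Set.Icc 0 s) :=
    isPreconnected_Icc.image f hfc.continuousOn
  have hS'sub : f '' Set.Icc 0 s ⊆ Y ∪ Y' := by
    rintro _ ⟨u, hu, rfl⟩
    have huT : u ∉ T := fun huT => absurd (csInf_le hTbdd huT)
      (not_le.2 (lt_of_le_of_lt hu.2 hslt))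
    have huI : u ∈ Set.Icc (0:ℝ) 1 := ⟨hu.1, le_trans hu.2 (le_trans hs.2 ht₀1)⟩
    have : f u ∉ KY := fun hK => huT ⟨huI, hK⟩
    rw [hYu]; exact this
  rcases hS'.subset_or_subset hYo hY'o hYd hS'sub with hsub | hsub
  · have hxY : x ∈ Y := hsub ⟨0, ⟨le_refl _, hs.1⟩, hf0⟩
    exact hYd.ne_of_mem hxY hxY' rfl
  · have : f s ∈ Y' := hsub ⟨s, ⟨hs.1, le_refl _⟩, rfl⟩
    exact hYd.ne_of_mem (hB hwK) this rfl

theorem stmt_7 {X : Type*} [TopologicalSpace X] [TopologicalSpace.MetrizableSpace X]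
    [PathConnectedSpace X]
    (KY KZ Y Y' Z Z' : Set X)
    (hKYcl : IsClosed KY) (hKYconn : IsConnected KY)
    (hKZcl : IsClosed KZ) (hKZconn : IsConnected KZ)
    (hKdisj : Disjoint KY KZ)
    (hYo : IsOpen Y) (hY'o : IsOpen Y') (hYne : Y.Nonempty) (hY'ne : Y'.Nonempty)
    (hYd : Disjoint Y Y') (hYu : Y ∪ Y' = KYᶜ)
    (hZo : IsOpen Z) (hZ'o : IsOpen Z') (hZne : Z.Nonempty) (hZ'ne : Z'.Nonempty)
    (hZd : Disjoint Z Z') (hZu : Z ∪ Z' = KZᶜ) :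
    Y ∩ Z = ∅ ∨ Y ∩ Z' = ∅ ∨ Y' ∩ Z = ∅ ∨ Y' ∩ Z' = ∅ := by
  have hKYsub : KY ⊆ Z ∪ Z' := by rw [hZu]; exact hKdisj.subset_compl_right
  have hKZsub : KZ ⊆ Y ∪ Y' := by rw [hYu]; exact hKdisj.symm.subset_compl_right
  have hYu' : Y' ∪ Y = KYᶜ := by rw [Set.union_comm]; exact hYu
  have hZu' : Z' ∪ Z = KZᶜ := by rw [Set.union_comm]; exact hZu
  rcases hKYconn.isPreconnected.subset_or_subset hZo hZ'o hZd hKYsub with hA | hA <;>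
  rcases hKZconn.isPreconnected.subset_or_subset hYo hY'o hYd hKZsub with hB | hB
  · exact Or.inr (Or.inr (Or.inr (key_lemma hKYcl hKdisj hKZconn.nonempty hYo hY'o hYd hYu
      hZo hZ'o hZd hZu hA hB)))
  · exact Or.inr (Or.inl (key_lemma hKYcl hKdisj hKZconn.nonempty hY'o hYo hYd.symm hYu'
      hZo hZ'o hZd hZu hA hB))
  · exact Or.inr (Or.inr (Or.inl (key_lemma hKYcl hKdisj hKZconn.nonempty hYo hY'o hYd hYu
      hZ'o hZo hZd.symm hZu' hA hB)))
  · exact Or.inl (key_lemma hKYcl hKdisj hKZconn.nonempty hY'o hYo hYd.symm hYu'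
      hZ'o hZo hZd.symm hZu' hA hB)
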